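/- arXiv:2308.11517 — 3 statements merged into one kernel-verified Lean document; each statement's English description precedes it below -/
import Mathlib

section
/- For any simple graph G, the path cover number P(G) is at most the zero forcing number Z(G). -/
open SimpleGraph

section ZF
variable {V : Type*}

/-- One round of the zero forcing color change rule applied to the blue set `S`. -/
def forceStep (G : SimpleGraph V) (S : Set V) : Set V :=
  S ∪ {w | ∃ u ∈ S, G.Adj u w ∧ ∀ x, G.Adj u x → x ∉ S → x = w}

/-- `S` is a zero forcing set: repeatedly applying the color change rule turns all
vertices blue; equivalently every forcing-closed superset of `S` is everything. -/
def IsZeroForcingSet (G : SimpleGraph V) (S : Set V) : Prop :=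
  ∀ T : Set V, S ⊆ T → forceStep G T ⊆ T → T = Set.univ

/-- The zero forcing number `Z(G)`. -/
noncomputable def zeroForcingNumber (G : SimpleGraph V) [Fintype V] : ℕ :=
  sInf {n | ∃ S : Finset V, S.card = n ∧ IsZeroForcingSet G ↑S}

/-- The list `l` enumerates an induced path of `G` (a single vertex counts). -/
def IsListPath (G : SimpleGraph V) (l : List V) : Prop :=
  l.Nodup ∧ ∀ i j : Fin l.length,
    (G.Adj (l.get i) (l.get j) ↔ (i.val + 1 = j.val ∨ j.val + 1 = i.val))

/-- The set `P` induces a path in `G`. -/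
def IsInducedPathSet (G : SimpleGraph V) (P : Set V) : Prop :=
  ∃ l : List V, IsListPath G l ∧ {v | v ∈ l} = P

/-- The path cover number `P(G)`: the minimum number of parts in a partition of the
vertex set into sets each inducing a path. -/
noncomputable def pathCoverNumber (G : SimpleGraph V) [Fintype V] [DecidableEq V] : ℕ :=
  sInf {n | ∃ P : Finpartition (Finset.univ : Finset V),
    P.parts.card = n ∧ ∀ p ∈ P.parts, IsInducedPathSet G ↑p}

/-- `G` is 2-connected: at least 3 vertices, connected, and deleting any vertex
leaves a connected graph. -/
def IsTwoConnected (G : SimpleGraph V) [Fintype V] : Prop :=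
  3 ≤ Fintype.card V ∧ G.Connected ∧ ∀ v : V, (G.induce {w : V | w ≠ v}).Connected

/-- `σ` places the vertices of `G` on a circle (in the order given by `Fin`) so that no
two edges, drawn as chords, cross; this witnesses outerplanarity of `G`. -/
def IsOuterplanarEmbedding (G : SimpleGraph V) [Fintype V]
    (σ : V ≃ Fin (Fintype.card V)) : Prop :=
  ∀ a b c d : V, G.Adj a b → G.Adj c d →
    ¬(σ a < σ c ∧ σ c < σ b ∧ σ b < σ d)

/-- A graph is outerplanar iff its vertices can be placed on a circle with all
edges drawn as pairwise non-crossing chords. -/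
def IsOuterplanar (G : SimpleGraph V) [Fintype V] : Prop :=
  ∃ σ : V ≃ Fin (Fintype.card V), IsOuterplanarEmbedding G σ

/-- `v` is the cyclic successor of `u` among the elements of `F`, with respect to the
circular order induced by `σ`. -/
def nextIn {n : ℕ} (σ : V ≃ Fin n) (F : Finset V) (u v : V) : Prop :=
  u ∈ F ∧ v ∈ F ∧ u ≠ v ∧
    ((σ u < σ v ∧ ∀ w ∈ F, σ u < σ w → σ v ≤ σ w) ∨
     ((∀ w ∈ F, σ w ≤ σ u) ∧ (∀ w ∈ F, σ v ≤ σ w)))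

/-- `F` is (the vertex set of) a bounded face of the outerplanar embedding `σ` of the
2-connected outerplanar graph `G`: in the circular order, consecutive members of `F`
are exactly the adjacent pairs inside `F` (so `F` spans a chordless polygon). -/
def IsFace (G : SimpleGraph V) [Fintype V] (σ : V ≃ Fin (Fintype.card V))
    (F : Finset V) : Prop :=
  3 ≤ F.card ∧ ∀ u ∈ F, ∀ v ∈ F,
    (G.Adj u v ↔ (nextIn σ F u v ∨ nextIn σ F v u))

/-- The weak dual of the embedded outerplanar graph `G`: vertices are the bounded
faces, two faces being adjacent iff they share an edge of `G`. -/
def weakDual (G : SimpleGraph V) [Fintype V] (σ : V ≃ Fin (Fintype.card V)) :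
    SimpleGraph {F : Finset V // IsFace G σ F} where
  Adj F₁ F₂ := F₁ ≠ F₂ ∧ ∃ u v, G.Adj u v ∧ u ∈ F₁.1 ∧ u ∈ F₂.1 ∧ v ∈ F₁.1 ∧ v ∈ F₂.1
  symm := by
    constructor
    rintro F₁ F₂ ⟨hne, u, v, ha, h1, h2, h3, h4⟩
    exact ⟨hne.symm, u, v, ha, h2, h1, h4, h3⟩
  loopless := by constructor; rintro F ⟨hne, -⟩; exact hne rfl

/-- The degree of a face in the weak dual. -/
noncomputable def dualDeg (G : SimpleGraph V) [Fintype V]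
    (σ : V ≃ Fin (Fintype.card V)) (F : {F : Finset V // IsFace G σ F}) : ℕ :=
  ((weakDual G σ).neighborSet F).ncard

/-- A leaf face: a face which is a leaf of the weak dual tree. -/
def IsLeafFace (G : SimpleGraph V) [Fintype V] (σ : V ≃ Fin (Fintype.card V))
    (F : {F : Finset V // IsFace G σ F}) : Prop :=
  dualDeg G σ F = 1

/-- `n_ℓ`: the number of leaves of the weak dual. -/
noncomputable def numDualLeaves (G : SimpleGraph V) [Fintype V]
    (σ : V ≃ Fin (Fintype.card V)) : ℕ :=
  Nat.card {F : {F : Finset V // IsFace G σ F} // IsLeafFace G σ F}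

end ZF

section FT
variable {V : Type*} [Fintype V]

/-- Branch faces: faces of weak-dual degree 2 that are adjacent to a leaf face or to
another branch face. -/
inductive IsBranchFace (G : SimpleGraph V) (σ : V ≃ Fin (Fintype.card V)) :
    {F : Finset V // IsFace G σ F} → Prop
  | leaf (F F' : {F : Finset V // IsFace G σ F}) :
      dualDeg G σ F = 2 → (weakDual G σ).Adj F F' → IsLeafFace G σ F' →
      IsBranchFace G σ F
  | branch (F F' : {F : Finset V // IsFace G σ F}) :
      dualDeg G σ F = 2 → (weakDual G σ).Adj F F' → IsBranchFace G σ F' →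
      IsBranchFace G σ F

/-- Limb faces: faces of weak-dual degree at least 3 adjacent to a leaf or branch face. -/
def IsLimbFace (G : SimpleGraph V) (σ : V ≃ Fin (Fintype.card V))
    (F : {F : Finset V // IsFace G σ F}) : Prop :=
  3 ≤ dualDeg G σ F ∧
    ∃ F', (weakDual G σ).Adj F F' ∧ (IsLeafFace G σ F' ∨ IsBranchFace G σ F')

/-- Trunk faces: faces of weak-dual degree at least 2 that are adjacent to no leaf
face and no branch face. -/
def IsTrunkFace (G : SimpleGraph V) (σ : V ≃ Fin (Fintype.card V))
    (F : {F : Finset V // IsFace G σ F}) : Prop :=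
  2 ≤ dualDeg G σ F ∧
    ∀ F', (weakDual G σ).Adj F F' → ¬(IsLeafFace G σ F' ∨ IsBranchFace G σ F')

/-- The vertices of the foliage of `G`: vertices lying on a leaf, branch, or limb face. -/
def foliageSet (G : SimpleGraph V) (σ : V ≃ Fin (Fintype.card V)) : Set V :=
  {v | ∃ F : {F : Finset V // IsFace G σ F},
    (IsLeafFace G σ F ∨ IsBranchFace G σ F ∨ IsLimbFace G σ F) ∧ v ∈ F.1}

/-- The vertices of the trunk of `G`: vertices lying on a trunk face. -/
def trunkSet (G : SimpleGraph V) (σ : V ≃ Fin (Fintype.card V)) : Set V :=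
  {v | ∃ F : {F : Finset V // IsFace G σ F}, IsTrunkFace G σ F ∧ v ∈ F.1}

/-- Boundary vertices: vertices in both the foliage and the trunk. -/
def boundarySet (G : SimpleGraph V) (σ : V ≃ Fin (Fintype.card V)) : Set V :=
  foliageSet G σ ∩ trunkSet G σ

end FT

section Chains
variable {V : Type*} [Fintype V] [DecidableEq V]

lemma isListPath_singleton (G : SimpleGraph V) (s : V) : IsListPath G [s] := by
  refine ⟨List.nodup_singleton s, ?_⟩
  intro i j
  fin_cases i <;> fin_cases j <;> simp

structure ChainState (G : SimpleGraph V) (S : Finset V) where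
  T : Finset V
  c : V → List V
  hmem : ∀ v, v ∈ T ↔ ∃ s ∈ S, v ∈ c s
  hstart : ∀ s ∈ S, s ∈ c s
  hdisj : ∀ s ∈ S, ∀ s' ∈ S, s ≠ s' → ∀ v, v ∈ c s → v ∉ c s'
  hpath : ∀ s ∈ S, IsListPath G (c s)
  honly : ∀ s ∈ S, ∀ i : ℕ, ∀ a b : V, (c s)[i]? = some a → (c s)[i+1]? = some b →
    ∀ x, G.Adj a x → x = b ∨ x ∈ T

def initState (G : SimpleGraph V) (S : Finset V) : ChainState G S where
  T := S
  c := fun s => [s]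
  hmem := by
    intro v
    constructor
    · intro hv; exact ⟨v, hv, by simp⟩
    · rintro ⟨s, hs, hv⟩; simp at hv; subst hv; exact hs
  hstart := by intro s _; simp
  hdisj := by intro s hs s' hs' hne v hv hv'; simp_all
  hpath := fun s _ => isListPath_singleton G s
  honly := by intro s _ i a b h1 h2 x hx; simp at h2

lemma isListPath_append (G : SimpleGraph V) (l : List V) (w : V) (hl : IsListPath G l)
    (hw : w ∉ l) (hlen : 0 < l.length)
    (hadj : G.Adj (l[l.length - 1]'(by omega)) w)
    (hna : ∀ i : ℕ, (h : i + 1 < l.length) → ¬ G.Adj (l[i]'(Nat.lt_of_succ_lt h)) w) :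
    IsListPath G (l ++ [w]) := by
  obtain ⟨hnd, hiff⟩ := hl
  have idx : ∀ {a b : ℕ} (ha : a < l.length) (hb : b < l.length), a = b → l[a] = l[b] := by
    intro a b ha hb h; subst h; rfl
  constructor
  · simpa [List.nodup_append] using ⟨hnd, fun a ha h => hw (h ▸ ha)⟩
  intro i j
  have hi2 : (i : ℕ) < l.length + 1 := by simpa using i.isLt
  have hj2 : (j : ℕ) < l.length + 1 := by simpa using j.isLt
  have geti : ∀ k : Fin (l ++ [w]).length, (l ++ [w]).get k =
      if h : k.val < l.length then l[k.val] else w := by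
    intro k
    split
    · next h => exact List.getElem_append_left h
    · next h =>
      have hk2 : (k : ℕ) < l.length + 1 := by simpa using k.isLt
      have : (k : ℕ) = l.length := by omega
      simp [List.getElem_append_right, this]
  rw [geti i, geti j]
  by_cases hi : i.val < l.length <;> by_cases hj : j.val < l.length
  · simp only [dif_pos hi, dif_pos hj]
    exact hiff ⟨i, hi⟩ ⟨j, hj⟩
  · have hjv : j.val = l.length := by omega
    simp only [dif_pos hi, dif_neg hj]
    constructor
    · intro ha
      by_cases hi1 : i.val + 1 < l.length
      · exact absurd ha (hna i.val hi1)
      · left; omega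
    · intro h
      rcases h with h | h
      · have e : l[(i:ℕ)] = l[l.length - 1]'(by omega) := idx _ _ (by omega)
        rw [e]; exact hadj
      · omega
  · have hiv : i.val = l.length := by omega
    simp only [dif_neg hi, dif_pos hj]
    constructor
    · intro ha
      by_cases hj1 : j.val + 1 < l.length
      · exact absurd ha.symm (hna j.val hj1)
      · right; omega
    · intro h
      rcases h with h | h
      · omega
      · have e : l[(j:ℕ)] = l[l.length - 1]'(by omega) := idx _ _ (by omega)
        rw [e]; exact hadj.symm
  · simp only [dif_neg hi, dif_neg hj]
    constructor
    · intro ha; exact absurd ha (G.irrefl)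
    · intro h; omega

lemma step (G : SimpleGraph V) (S : Finset V) (st : ChainState G S) (u w : V)
    (hu : u ∈ st.T) (hw : w ∉ st.T) (ha : G.Adj u w)
    (hf : ∀ x, G.Adj u x → x ∉ (st.T : Set V) → x = w) :
    ∃ st' : ChainState G S, st'.T = insert w st.T := by
  obtain ⟨s, hs, hus⟩ := (st.hmem u).1 hu
  set l := st.c s with hl
  obtain ⟨i, hilt, hiu⟩ := List.mem_iff_getElem.1 hus
  have hlen0 : 0 < l.length := List.length_pos_iff.2 (List.ne_nil_of_mem hus)
  -- u is the last element of c s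
  have hclast : i = l.length - 1 := by
    by_contra hne
    have hi1 : i + 1 < l.length := by omega
    have h1 : l[i]? = some u := by
      rw [List.getElem?_eq_getElem hilt, hiu]
    have h2 : l[i+1]? = some (l[i+1]'hi1) := List.getElem?_eq_getElem hi1
    rcases st.honly s hs i u _ h1 h2 w ha with h | h
    · exact hw ((st.hmem w).2 ⟨s, hs, h ▸ List.getElem_mem _⟩)
    · exact hw h
  have hwnotmem : ∀ t ∈ S, w ∉ st.c t := by
    intro t ht hmem
    exact hw ((st.hmem w).2 ⟨t, ht, hmem⟩)
  have hulast : l[l.length - 1]'(by omega) = u := by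
    rw [← hiu]; congr 1; omega
  refine ⟨⟨insert w st.T, fun t => if t = s then l ++ [w] else st.c t, ?_, ?_, ?_, ?_, ?_⟩, rfl⟩
  · intro v
    constructor
    · intro hv
      rcases Finset.mem_insert.1 hv with h | h
      · exact ⟨s, hs, by simp [h]⟩
      · obtain ⟨t, ht, hvt⟩ := (st.hmem v).1 h
        refine ⟨t, ht, ?_⟩
        by_cases hts : t = s
        · subst hts; rw [if_pos rfl]; exact List.mem_append_left _ hvt
        · rw [if_neg hts]; exact hvt
    · rintro ⟨t, ht, hvt⟩
      by_cases hts : t = s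
      · subst hts
        rw [if_pos rfl] at hvt
        rcases List.mem_append.1 hvt with h | h
        · exact Finset.mem_insert_of_mem ((st.hmem v).2 ⟨t, ht, h⟩)
        · simp at h; simp [h]
      · rw [if_neg hts] at hvt
        exact Finset.mem_insert_of_mem ((st.hmem v).2 ⟨t, ht, hvt⟩)
  · intro t ht
    by_cases hts : t = s
    · subst hts; rw [if_pos rfl]; exact List.mem_append_left _ (st.hstart t ht)
    · rw [if_neg hts]; exact st.hstart t ht
  · intro t ht t' ht' hne v hv hv'
    by_cases hts : t = s <;> by_cases hts' : t' = s
    · exact hne (hts.trans hts'.symm)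
    · subst hts
      rw [if_pos rfl] at hv
      rw [if_neg hts'] at hv'
      rcases List.mem_append.1 hv with h | h
      · exact st.hdisj t ht t' ht' hne v h hv'
      · simp at h; subst h; exact hwnotmem t' ht' hv'
    · subst hts'
      rw [if_pos rfl] at hv'
      rw [if_neg hts] at hv
      rcases List.mem_append.1 hv' with h | h
      · exact st.hdisj t ht t' ht' hne v hv h
      · simp at h; subst h; exact hwnotmem t ht hv
    · rw [if_neg hts] at hv
      rw [if_neg hts'] at hv'
      exact st.hdisj t ht t' ht' hne v hv hv'
  · intro t ht
    by_cases hts : t = s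
    · subst hts
      rw [if_pos rfl]
      refine isListPath_append G l w (st.hpath t ht) (hwnotmem t ht) hlen0 ?_ ?_
      · rw [hulast]; exact ha
      · intro k hk hadj
        have h1 : l[k]? = some (l[k]'(Nat.lt_of_succ_lt hk)) := List.getElem?_eq_getElem _
        have h2 : l[k+1]? = some (l[k+1]'hk) := List.getElem?_eq_getElem hk
        rcases st.honly t ht k _ _ h1 h2 w hadj with h | h
        · exact hwnotmem t ht (h ▸ List.getElem_mem _)
        · exact hw h
    · rw [if_neg hts]
      exact st.hpath t ht
  · intro t ht k a b h1 h2 x hx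
    by_cases hts : t = s
    · subst hts
      rw [if_pos rfl] at h1 h2
      by_cases hk1 : k + 1 < l.length
      · rw [List.getElem?_append, if_pos (by omega)] at h1
        rw [List.getElem?_append, if_pos hk1] at h2
        rcases st.honly t ht k a b h1 h2 x hx with h | h
        · exact Or.inl h
        · exact Or.inr (Finset.mem_insert_of_mem h)
      · -- k+1 ≥ l.length; from h2 being some, k+1 = l.length, so a = u, b = w
        have hlen2 : k + 1 < l.length + 1 := by
          have := (List.getElem?_eq_some_iff.1 h2).1
          simpa using this
        have hkl : k + 1 = l.length := by omega
        have hb : b = w := by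
          rw [List.getElem?_append, if_neg (by omega), hkl] at h2
          simp at h2; exact h2.symm
        have hau : a = u := by
          rw [List.getElem?_append, if_pos (by omega)] at h1
          rw [List.getElem?_eq_getElem (by omega : k < l.length)] at h1
          have : l[k]'(by omega) = a := by injection h1
          rw [← this, ← hulast]; congr 1; omega
        subst hau hb
        by_cases hxT : x ∈ st.T
        · exact Or.inr (Finset.mem_insert_of_mem hxT)
        · exact Or.inl (hf x hx (by exact_mod_cast hxT))
    · rw [if_neg hts] at h1 h2
      rcases st.honly t ht k a b h1 h2 x hx with h | h
      · exact Or.inl h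
      · exact Or.inr (Finset.mem_insert_of_mem h)


lemma exists_full (G : SimpleGraph V) (S : Finset V) (hS : IsZeroForcingSet G ↑S) :
    ∀ k (st : ChainState G S), (Finset.univ \ st.T).card ≤ k →
      ∃ st' : ChainState G S, st'.T = Finset.univ := by
  intro k
  induction k with
  | zero =>
    intro st hst
    refine ⟨st, ?_⟩
    have : Finset.univ \ st.T = ∅ := Finset.card_eq_zero.1 (Nat.le_zero.1 hst)
    have hsub : (Finset.univ : Finset V) ⊆ st.T := by
      rwa [Finset.sdiff_eq_empty_iff_subset] at this
    exact Finset.eq_univ_iff_forall.2 fun v => hsub (Finset.mem_univ v)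
  | succ n ih =>
    intro st hst
    by_cases hT : st.T = Finset.univ
    · exact ⟨st, hT⟩
    · have hSsub : (S : Set V) ⊆ (st.T : Set V) := by
        intro s hs
        simp only [Finset.coe_mem, Finset.mem_coe] at *
        exact (st.hmem s).2 ⟨s, hs, st.hstart s hs⟩
      have hnotclosed : ¬ forceStep G ↑st.T ⊆ ↑st.T := by
        intro hclosed
        have := hS ↑st.T hSsub hclosed
        apply hT
        apply Finset.coe_injective
        simp [this]
      obtain ⟨w, hwF, hwT⟩ := Set.not_subset.1 hnotclosed
      rcases hwF with hwT' | ⟨u, hu, ha, hf⟩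
      · exact absurd hwT' hwT
      · have hwT2 : w ∉ st.T := by simpa using hwT
        have hu2 : u ∈ st.T := by simpa using hu
        obtain ⟨st', hst'⟩ := step G S st u w hu2 hwT2 ha hf
        apply ih st'
        have hcard : (Finset.univ \ st'.T).card < (Finset.univ \ st.T).card := by
          apply Finset.card_lt_card
          rw [hst']
          constructor
          · intro v hv
            simp only [Finset.mem_sdiff, Finset.mem_insert] at *
            exact ⟨hv.1, fun h => hv.2 (Or.inr h)⟩
          · intro hsub
            have := hsub (Finset.mem_sdiff.2 ⟨Finset.mem_univ w, hwT2⟩)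
            simp at this
        omega

end Chains

/-- For any simple graph `G`, the path cover number `P(G)` is at most
the zero forcing number `Z(G)`. -/
theorem pathCoverNumber_le_zeroForcingNumber {V : Type*} [Fintype V] [DecidableEq V]
    (G : SimpleGraph V) : pathCoverNumber G ≤ zeroForcingNumber G := by
  classical
  have hne : {n | ∃ S : Finset V, S.card = n ∧ IsZeroForcingSet G ↑S}.Nonempty := by
    refine ⟨Fintype.card V, Finset.univ, Finset.card_univ, ?_⟩
    intro T hT _
    apply Set.eq_univ_of_univ_subset
    simpa using hT
  obtain ⟨S, hcard, hZFS⟩ := Nat.sInf_mem hne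
  obtain ⟨st, hstT⟩ := exists_full G S hZFS (Finset.univ \ (initState G S).T).card
    (initState G S) le_rfl
  set parts : Finset (Finset V) := S.image (fun s => (st.c s).toFinset) with hparts
  have hpmem : ∀ p ∈ parts, ∃ s ∈ S, p = (st.c s).toFinset := by
    intro p hp
    obtain ⟨s, hs, h⟩ := Finset.mem_image.1 hp
    exact ⟨s, hs, h.symm⟩
  have hP : ∃ P : Finpartition (Finset.univ : Finset V),
      P.parts.card = parts.card ∧ ∀ p ∈ P.parts, IsInducedPathSet G ↑p := by
    refine ⟨⟨parts, ?_, ?_, ?_⟩, rfl, ?_⟩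
    · rw [Finset.supIndep_iff_pairwiseDisjoint]
      intro p hp q hq hpq
      obtain ⟨s, hs, rfl⟩ := hpmem p hp
      obtain ⟨t, ht, rfl⟩ := hpmem q hq
      have hst : s ≠ t := by rintro rfl; exact hpq rfl
      simp only [Function.onFun, id]
      rw [Finset.disjoint_left]
      intro v hv hv'
      rw [List.mem_toFinset] at hv hv'
      exact st.hdisj s hs t ht hst v hv hv'
    · apply Finset.eq_univ_iff_forall.2
      intro v
      have hvT : v ∈ st.T := hstT ▸ Finset.mem_univ v
      obtain ⟨s, hs, hvc⟩ := (st.hmem v).1 hvT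
      rw [Finset.mem_sup]
      exact ⟨(st.c s).toFinset, Finset.mem_image_of_mem _ hs, List.mem_toFinset.2 hvc⟩
    · intro hbot
      obtain ⟨s, hs, h⟩ := hpmem _ hbot
      have : s ∈ (⊥ : Finset V) := h ▸ List.mem_toFinset.2 (st.hstart s hs)
      simp at this
    · intro p hp
      obtain ⟨s, hs, rfl⟩ := hpmem p hp
      exact ⟨st.c s, st.hpath s hs, by ext v; simp⟩
  have h1 : pathCoverNumber G ≤ parts.card := Nat.sInf_le hP
  have h2 : parts.card ≤ S.card := Finset.card_image_le
  rw [zeroForcingNumber]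
  omega
end

section
/- For any graph G with at least one edge, the zero forcing number satisfies Z(G) ≥ δ(G), the minimum degree of G. -/
open SimpleGraph

/-- For any graph `G` with at least one edge, `Z(G) ≥ δ(G)`. -/
theorem minDegree_le_zeroForcingNumber {V : Type*} [Fintype V] (G : SimpleGraph V)
    [DecidableRel G.Adj] (h : ∃ u v, G.Adj u v) :
    G.minDegree ≤ zeroForcingNumber G := by
  classical
  obtain ⟨u0, v0, huv⟩ := h
  have hne : {n | ∃ S : Finset V, S.card = n ∧ IsZeroForcingSet G ↑S}.Nonempty := by
    refine ⟨(Finset.univ : Finset V).card, Finset.univ, rfl, ?_⟩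
    intro T hT _
    apply Set.eq_univ_of_univ_subset
    intro v _
    exact hT (by simp)
  obtain ⟨S, hcard, hzfs⟩ := Nat.sInf_mem hne
  rw [zeroForcingNumber, ← hcard]
  by_cases hsub : forceStep G ↑S ⊆ ↑S
  · have huniv : (↑S : Set V) = Set.univ := hzfs ↑S subset_rfl hsub
    have : S = Finset.univ := by
      ext v
      simp only [Finset.mem_univ, iff_true]
      exact Set.eq_univ_iff_forall.mp huniv v
    rw [this, Finset.card_univ]
    exact le_of_lt (lt_of_le_of_lt (G.minDegree_le_degree u0) (G.degree_lt_card_verts u0))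
  · obtain ⟨w, hwF, hwS⟩ := Set.not_subset.mp hsub
    rcases hwF with hwS' | ⟨u, huS, hadj, hforce⟩
    · exact absurd hwS' hwS
    have hsubN : G.neighborFinset u ⊆ insert w (S.erase u) := by
      intro x hx
      rw [SimpleGraph.mem_neighborFinset] at hx
      by_cases hxS : x ∈ S
      · exact Finset.mem_insert_of_mem (Finset.mem_erase.mpr ⟨fun he => G.loopless.irrefl u (he ▸ hx), hxS⟩)
      · exact Finset.mem_insert.mpr (Or.inl (hforce x hx hxS))
    have hdeg : G.degree u ≤ S.card := by
      calc G.degree u = (G.neighborFinset u).card := rfl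
        _ ≤ (insert w (S.erase u)).card := Finset.card_le_card hsubN
        _ ≤ (S.erase u).card + 1 := Finset.card_insert_le _ _
        _ = (S.card - 1) + 1 := by rw [Finset.card_erase_of_mem huS]
        _ = S.card := Nat.succ_pred_eq_of_pos (Finset.card_pos.mpr ⟨u, huS⟩)
    exact le_trans (G.minDegree_le_degree u) hdeg
end

section
/- For the sun graph S_k on 2k vertices, the path cover number P(S_k) equals k. -/
open SimpleGraph

/-- The sun graph `S_k` on `2k` vertices: a cycle `v_0, …, v_{k-1}` (the left
summands) together with vertices `u_0, …, u_{k-1}` (the right summands) where `u_i`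
is adjacent to `v_i` and `v_{i+1}` (indices mod `k`). -/
def sunGraph (k : ℕ) : SimpleGraph (Fin k ⊕ Fin k) :=
  SimpleGraph.fromRel (fun x y =>
    match x, y with
    | Sum.inl i, Sum.inl j => (j : ℕ) = ((i : ℕ) + 1) % k
    | Sum.inr i, Sum.inl j => (j : ℕ) = (i : ℕ) ∨ (j : ℕ) = ((i : ℕ) + 1) % k
    | _, _ => False)

namespace SunPCN

open Finset

variable {k : ℕ} [NeZero k]

section listlemmas
variable {V : Type*} {G : SimpleGraph V} {l : List V}

lemma consec_adj (hl : IsListPath G l) {m : ℕ} (h : m + 1 < l.length) :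
    G.Adj (l.get ⟨m, by omega⟩) (l.get ⟨m+1, h⟩) :=
  (hl.2 ⟨m, by omega⟩ ⟨m+1, h⟩).mpr (Or.inl rfl)

lemma adj_consec (hl : IsListPath G l) {m n : ℕ} (hm : m < l.length) (hn : n < l.length)
    (h : G.Adj (l.get ⟨m, hm⟩) (l.get ⟨n, hn⟩)) : m + 1 = n ∨ n + 1 = m :=
  (hl.2 ⟨m, hm⟩ ⟨n, hn⟩).mp h

lemma get_ne (hl : IsListPath G l) {m n : ℕ} (hm : m < l.length) (hn : n < l.length)
    (h : m ≠ n) : l.get ⟨m, hm⟩ ≠ l.get ⟨n, hn⟩ := by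
  intro he
  exact h (by simpa using Fin.val_eq_of_eq (hl.1.get_inj_iff.mp he))

lemma exists_nbr (hl : IsListPath G l) {x y : V} (hx : x ∈ l) (hy : y ∈ l) (hxy : x ≠ y) :
    ∃ z ∈ l, G.Adj x z := by
  obtain ⟨i, hi⟩ := List.get_of_mem hx
  obtain ⟨j, hj⟩ := List.get_of_mem hy
  have hij : i ≠ j := by rintro rfl; rw [hi] at hj; exact hxy hj
  have hlen : 2 ≤ l.length := by
    rcases i with ⟨i, hi'⟩; rcases j with ⟨j, hj'⟩
    have : i ≠ j := by simpa using Fin.val_ne_of_ne hij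
    omega
  rcases i with ⟨i, hi'⟩
  by_cases hc : i + 1 < l.length
  · exact ⟨l.get ⟨i+1, hc⟩, List.get_mem _ _, hi ▸ consec_adj hl hc⟩
  · have h1 : 1 ≤ i := by omega
    have he : (⟨i-1+1, by omega⟩ : Fin l.length) = ⟨i, hi'⟩ := by
      apply Fin.ext; simp; omega
    have hadj := consec_adj hl (m := i - 1) (by omega)
    rw [he] at hadj
    exact ⟨l.get ⟨i-1, by omega⟩, List.get_mem _ _, hi ▸ hadj.symm⟩

lemma no_triangle (hl : IsListPath G l) {x y z : V} (hx : x ∈ l) (hy : y ∈ l) (hz : z ∈ l)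
    (hxy : G.Adj x y) (hyz : G.Adj y z) (hxz : G.Adj x z) : False := by
  obtain ⟨i, hi⟩ := List.get_of_mem hx
  obtain ⟨j, hj⟩ := List.get_of_mem hy
  obtain ⟨m, hm⟩ := List.get_of_mem hz
  subst hi hj hm
  have h1 := (hl.2 i j).mp hxy
  have h2 := (hl.2 j m).mp hyz
  have h3 := (hl.2 i m).mp hxz
  omega

end listlemmas

lemma val_add_one (hk : 2 ≤ k) (a : Fin k) : ((a+1 : Fin k) : ℕ) = (a.val + 1) % k := by
  rw [Fin.val_add, Fin.val_one']
  have : (1:ℕ) % k = 1 := Nat.mod_eq_of_lt (by omega)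
  rw [this]

lemma fin_one_ne_zero (hk : 2 ≤ k) : (1 : Fin k) ≠ 0 := by
  have := val_add_one hk 0
  intro h
  have := congrArg Fin.val h
  simp at this
  omega

lemma fin_add_one_ne (hk : 2 ≤ k) (a : Fin k) : a + 1 ≠ a := by
  intro h
  exact fin_one_ne_zero hk (by
    have : a + 1 = a + 0 := by rw [h, add_zero]
    exact add_left_cancel this)

lemma sun_adj_ll (hk : 3 ≤ k) (a b : Fin k) :
    (sunGraph k).Adj (Sum.inl a) (Sum.inl b) ↔ (b = a + 1 ∨ a = b + 1) := by
  rw [sunGraph, SimpleGraph.fromRel_adj]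
  have h1 := val_add_one (by omega : 2 ≤ k) a
  have h2 := val_add_one (by omega : 2 ≤ k) b
  constructor
  · rintro ⟨hne, h | h⟩
    · left; apply Fin.ext
      change (b:ℕ) = _ at h
      omega
    · right; apply Fin.ext
      change (a:ℕ) = _ at h
      omega
  · rintro (rfl | rfl)
    · exact ⟨fun h => fin_add_one_ne (by omega) a (Sum.inl_injective h).symm,
        Or.inl (show ((a+1 : Fin k):ℕ) = ((a:ℕ)+1)%k from h1)⟩
    · exact ⟨fun h => fin_add_one_ne (by omega) b (Sum.inl_injective h),
        Or.inr (show ((b+1 : Fin k):ℕ) = ((b:ℕ)+1)%k from h2)⟩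

lemma sun_adj_rl (hk : 3 ≤ k) (a b : Fin k) :
    (sunGraph k).Adj (Sum.inr a) (Sum.inl b) ↔ (b = a ∨ b = a + 1) := by
  rw [sunGraph, SimpleGraph.fromRel_adj]
  have h1 := val_add_one (by omega : 2 ≤ k) a
  constructor
  · rintro ⟨hne, h | h⟩
    · change (b:ℕ) = (a:ℕ) ∨ (b:ℕ) = _ at h
      rcases h with h | h
      · left; exact Fin.ext h
      · right; apply Fin.ext; omega
    · exact absurd h (by change ¬ False; simp)
  · rintro (rfl | rfl)
    · exact ⟨Sum.inr_ne_inl, Or.inl (Or.inl rfl)⟩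
    · exact ⟨Sum.inr_ne_inl, Or.inl (Or.inr (show ((a+1 : Fin k):ℕ) = ((a:ℕ)+1)%k from h1))⟩

omit [NeZero k] in
lemma sun_adj_rr (a b : Fin k) : ¬ (sunGraph k).Adj (Sum.inr a) (Sum.inr b) := by
  rw [sunGraph, SimpleGraph.fromRel_adj]
  rintro ⟨hne, h | h⟩ <;> exact h

lemma sun_adj_lr (hk : 3 ≤ k) (a b : Fin k) :
    (sunGraph k).Adj (Sum.inl a) (Sum.inr b) ↔ (a = b ∨ a = b + 1) := by
  rw [(sunGraph k).adj_comm, sun_adj_rl hk]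

variable {l : List (Fin k ⊕ Fin k)}

lemma nbr_of_inr (hk : 3 ≤ k) {a : Fin k} {x : Fin k ⊕ Fin k}
    (h : (sunGraph k).Adj x (Sum.inr a)) : x = Sum.inl a ∨ x = Sum.inl (a + 1) := by
  rcases x with c | c
  · rcases (sun_adj_lr hk c a).mp h with rfl | rfl
    · exact Or.inl rfl
    · exact Or.inr rfl
  · exact absurd h (sun_adj_rr c a)

lemma no_interior_inr (hk : 3 ≤ k) (hl : IsListPath (sunGraph k) l) {m : ℕ}
    (h0 : 0 < m) (h1 : m + 1 < l.length) {a : Fin k}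
    (ha : l.get ⟨m, by omega⟩ = Sum.inr a) : False := by
  have he : (⟨m-1+1, by omega⟩ : Fin l.length) = ⟨m, by omega⟩ := by
    apply Fin.ext; simp; omega
  have adj1 : (sunGraph k).Adj (l.get ⟨m-1, by omega⟩) (Sum.inr a) := by
    have := consec_adj hl (m := m-1) (by omega)
    rwa [he, ha] at this
  have adj2 : (sunGraph k).Adj (l.get ⟨m+1, h1⟩) (Sum.inr a) := by
    have := consec_adj hl (m := m) h1
    rw [ha] at this
    exact this.symm
  have hne : l.get ⟨m-1, by omega⟩ ≠ l.get ⟨m+1, h1⟩ := get_ne hl _ _ (by omega)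
  have hadj : (sunGraph k).Adj (l.get ⟨m-1, by omega⟩) (l.get ⟨m+1, h1⟩) := by
    rcases nbr_of_inr hk adj1 with hx | hx <;> rcases nbr_of_inr hk adj2 with hy | hy <;>
      rw [hx, hy] at hne ⊢
    · exact absurd rfl hne
    · exact (sun_adj_ll hk _ _).mpr (Or.inl rfl)
    · exact (sun_adj_ll hk _ _).mpr (Or.inr rfl)
    · exact absurd rfl hne
  rcases adj_consec hl _ _ hadj with h | h <;> omega

open Fin.NatCast Fin.CommRing in
lemma walk (hk : 3 ≤ k) (hl : IsListPath (sunGraph k) l) {i j : ℕ} (hj : j < l.length)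
    (hij : i ≤ j) {t t' : Fin k} (hi' : l.get ⟨i, by omega⟩ = Sum.inl (t+1))
    (hj' : l.get ⟨j, hj⟩ = Sum.inl (t'+1)) (ht : Sum.inl t ∉ l) :
    ∀ d (_hd : d ≤ j - i), l.get ⟨i+d, by omega⟩ = Sum.inl (t+1+(d : Fin k)) := by
  intro d
  induction d using Nat.strong_induction_on with
  | _ d IH =>
  intro hd
  match d with
  | 0 => simpa using hi'
  | (e+1) =>
    have hIe : l.get ⟨i+e, by omega⟩ = Sum.inl (t+1+(e : Fin k)) := IH e (by omega) (by omega)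
    set c : Fin k := t+1+(e : Fin k) with hc
    have hp1 : i + e + 1 < l.length := by omega
    have adj : (sunGraph k).Adj (Sum.inl c) (l.get ⟨i+e+1, hp1⟩) := by
      have := consec_adj hl (m := i+e) hp1
      rwa [hIe] at this
    rcases hx : l.get ⟨i+e+1, hp1⟩ with e' | a
    · rw [hx] at adj
      rcases (sun_adj_ll hk _ _).mp adj with h | h
      · have : i + (e+1) = i + e + 1 := by omega
        rw [h, hc]
        congr 1
        push_cast
        ring
      · have he' : e' = t + (e : Fin k) := by
          have : e' + 1 = t + (e : Fin k) + 1 := by rw [← h, hc]; ring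
          exact add_right_cancel this
        rcases Nat.eq_zero_or_pos e with rfl | hep
        · simp at he'
          rw [he'] at hx
          exact absurd (hx ▸ List.get_mem l _) ht
        · have he'' : e' = t + 1 + ((e-1 : ℕ) : Fin k) := by
            rw [he', Nat.cast_sub (by omega : 1 ≤ e)]
            push_cast
            ring
          have hIe1 : l.get ⟨i+(e-1), by omega⟩ = Sum.inl (t+1+((e-1:ℕ) : Fin k)) :=
            IH (e-1) (by omega) (by omega)
          have : l.get ⟨i+(e-1), by omega⟩ = l.get ⟨i+e+1, hp1⟩ := by
            rw [hIe1, hx, he'']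
          exact absurd this (get_ne hl _ _ (by omega))
    · have hj2 : i + e + 1 ≠ j := by
        intro h
        rw [show (⟨i+e+1, hp1⟩ : Fin l.length) = ⟨j, hj⟩ from Fin.ext h] at hx
        rw [hj'] at hx
        exact absurd hx (by simp)
      exact absurd hx.symm (by
        intro h
        exact no_interior_inr hk hl (m := i+e+1) (by omega) (by omega) h.symm)

open Fin.NatCast Fin.CommRing in
lemma unique_entry_aux (hk : 3 ≤ k) (hl : IsListPath (sunGraph k) l) {i j : ℕ}
    (hi : i < l.length) (hj : j < l.length) (hij : i ≤ j) {t t' : Fin k}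
    (hi' : l.get ⟨i, hi⟩ = Sum.inl (t+1)) (hj' : l.get ⟨j, hj⟩ = Sum.inl (t'+1))
    (ht : Sum.inl t ∉ l) (ht' : Sum.inl t' ∉ l) : t = t' := by
  have hw := walk hk hl hj hij hi' hj' ht
  have hd0 := hw (j - i) le_rfl
  rw [show (⟨i+(j-i), by omega⟩ : Fin l.length) = ⟨j, hj⟩ from
    Fin.ext (show i + (j-i) = j by omega)] at hd0
  rw [hj'] at hd0
  have heq : t' + 1 = t + 1 + ((j-i : ℕ) : Fin k) := Sum.inl_injective hd0
  rcases Nat.eq_zero_or_pos (j - i) with hz | hpos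
  · rw [hz] at heq
    simp only [Nat.cast_zero, add_zero] at heq
    exact (add_right_cancel heq).symm
  · exfalso
    have hd1 := hw (j - i - 1) (by omega)
    have : t + 1 + (((j-i-1 : ℕ)) : Fin k) = t' := by
      rw [Nat.cast_sub (by omega : 1 ≤ j - i)]
      have : t' = t + ((j-i : ℕ) : Fin k) := by
        have := heq
        rw [add_right_comm] at this
        exact add_right_cancel this
      rw [this]
      push_cast
      ring
    rw [this] at hd1
    exact ht' (hd1 ▸ List.get_mem l _)

lemma unique_entry (hk : 3 ≤ k) (hl : IsListPath (sunGraph k) l) {t t' : Fin k}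
    (h1 : Sum.inl (t+1) ∈ l) (h2 : Sum.inl t ∉ l)
    (h3 : Sum.inl (t'+1) ∈ l) (h4 : Sum.inl t' ∉ l) : t = t' := by
  obtain ⟨⟨i, hi⟩, hgi⟩ := List.get_of_mem h1
  obtain ⟨⟨j, hj⟩, hgj⟩ := List.get_of_mem h3
  rcases le_total i j with h | h
  · exact unique_entry_aux hk hl hi hj h hgi hgj h2 h4
  · exact (unique_entry_aux hk hl hj hi h hgj hgi h4 h2).symm

-- Finset versions

omit [NeZero k] in
lemma mem_of_ips {Q : Finset (Fin k ⊕ Fin k)} (hQ : IsInducedPathSet (sunGraph k) ↑Q) :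
    ∃ l : List (Fin k ⊕ Fin k), IsListPath (sunGraph k) l ∧ ∀ x, x ∈ l ↔ x ∈ Q := by
  obtain ⟨l, hl, hset⟩ := hQ
  exact ⟨l, hl, fun x => by rw [← Finset.mem_coe, ← hset]; rfl⟩

lemma part_no_triangle {Q : Finset (Fin k ⊕ Fin k)} (hQ : IsInducedPathSet (sunGraph k) ↑Q)
    {x y z : Fin k ⊕ Fin k} (hx : x ∈ Q) (hy : y ∈ Q) (hz : z ∈ Q)
    (hxy : (sunGraph k).Adj x y) (hyz : (sunGraph k).Adj y z)
    (hxz : (sunGraph k).Adj x z) : False := by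
  obtain ⟨l, hl, hmem⟩ := mem_of_ips hQ
  exact no_triangle hl ((hmem x).mpr hx) ((hmem y).mpr hy) ((hmem z).mpr hz) hxy hyz hxz

lemma part_isolated (hk : 3 ≤ k) {Q : Finset (Fin k ⊕ Fin k)}
    (hQ : IsInducedPathSet (sunGraph k) ↑Q) {a : Fin k} (h : Sum.inr a ∈ Q)
    (h1 : Sum.inl a ∉ Q) (h2 : Sum.inl (a+1) ∉ Q) {y : Fin k ⊕ Fin k} (hy : y ∈ Q) :
    y = Sum.inr a := by
  by_contra hne
  obtain ⟨l, hl, hmem⟩ := mem_of_ips hQ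
  obtain ⟨z, hz, hadj⟩ := exists_nbr hl ((hmem _).mpr h) ((hmem _).mpr hy)
    (fun hc => hne hc.symm)
  rcases nbr_of_inr hk hadj.symm with rfl | rfl
  · exact h1 ((hmem _).mp hz)
  · exact h2 ((hmem _).mp hz)

lemma part_unique_entry (hk : 3 ≤ k) {Q : Finset (Fin k ⊕ Fin k)}
    (hQ : IsInducedPathSet (sunGraph k) ↑Q) {t t' : Fin k}
    (h1 : Sum.inl (t+1) ∈ Q) (h2 : Sum.inl t ∉ Q)
    (h3 : Sum.inl (t'+1) ∈ Q) (h4 : Sum.inl t' ∉ Q) : t = t' := by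
  obtain ⟨l, hl, hmem⟩ := mem_of_ips hQ
  exact unique_entry hk hl ((hmem _).mpr h1) (fun hc => h2 ((hmem _).mp hc))
    ((hmem _).mpr h3) (fun hc => h4 ((hmem _).mp hc))

end SunPCN


namespace SunPCN

lemma lower_bound {k : ℕ} [NeZero k] (hk : 3 ≤ k)
    (P : Finpartition (Finset.univ : Finset (Fin k ⊕ Fin k)))
    (hP : ∀ p ∈ P.parts, IsInducedPathSet (sunGraph k) ↑p) : k ≤ P.parts.card := by
  classical
  have hex : ∀ x : Fin k ⊕ Fin k, ∃! q, q ∈ P.parts ∧ x ∈ q :=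
    fun x => P.existsUnique_mem (Finset.mem_univ x)
  set pt : (Fin k ⊕ Fin k) → Finset (Fin k ⊕ Fin k) :=
    fun x => P.parts.choose (x ∈ ·) (hex x) with hptdef
  have hpt_mem : ∀ x, pt x ∈ P.parts := fun x => Finset.choose_mem _ _ _
  have hpt_self : ∀ x, x ∈ pt x := fun x => Finset.choose_property (fun q => x ∈ q) P.parts (hex x)
  have hpt_eq : ∀ x q, q ∈ P.parts → x ∈ q → q = pt x :=
    fun x q hq hxq => P.eq_of_mem_parts hq (hpt_mem x) hxq (hpt_self x)
  -- adjacency facts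
  have adj_cyc : ∀ t : Fin k, (sunGraph k).Adj (Sum.inl t) (Sum.inl (t+1)) :=
    fun t => (sun_adj_ll hk _ _).mpr (Or.inl rfl)
  have adj_rt : ∀ t : Fin k, (sunGraph k).Adj (Sum.inr t) (Sum.inl t) :=
    fun t => (sun_adj_rl hk _ _).mpr (Or.inl rfl)
  have adj_rt1 : ∀ t : Fin k, (sunGraph k).Adj (Sum.inr t) (Sum.inl (t+1)) :=
    fun t => (sun_adj_rl hk _ _).mpr (Or.inr rfl)
  -- if the cycle edge (t, t+1) lies in one part, then the part of inr t avoids inl t, inl (t+1)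
  have hkey : ∀ t : Fin k, Sum.inl t ∈ pt (Sum.inl (t+1)) →
      Sum.inl t ∉ pt (Sum.inr t) ∧ Sum.inl (t+1) ∉ pt (Sum.inr t) := by
    intro t h
    have hQ := hP _ (hpt_mem (Sum.inr t))
    constructor
    · intro hc
      have e1 : pt (Sum.inr t) = pt (Sum.inl t) := hpt_eq _ _ (hpt_mem _) hc
      have e2 : pt (Sum.inl (t+1)) = pt (Sum.inl t) := hpt_eq _ _ (hpt_mem _) h
      have h1' : Sum.inl (t+1) ∈ pt (Sum.inr t) := by
        rw [e1, ← e2]; exact hpt_self _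
      exact part_no_triangle hQ (hpt_self (Sum.inr t)) hc h1'
        (adj_rt t) (adj_cyc t) (adj_rt1 t)
    · intro hc
      have e1 : pt (Sum.inr t) = pt (Sum.inl (t+1)) := hpt_eq _ _ (hpt_mem _) hc
      have h1' : Sum.inl t ∈ pt (Sum.inr t) := by rw [e1]; exact h
      exact part_no_triangle hQ (hpt_self (Sum.inr t)) h1' hc
        (adj_rt t) (adj_cyc t) (adj_rt1 t)
  set f : Fin k → Finset (Fin k ⊕ Fin k) := fun t =>
    if Sum.inl t ∈ pt (Sum.inl (t+1)) then pt (Sum.inr t) else pt (Sum.inl (t+1)) with hfdef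
  have hf_mem : ∀ t, f t ∈ P.parts := by
    intro t
    rw [hfdef]
    dsimp only
    split <;> exact hpt_mem _
  have hf_inj : Function.Injective f := by
    intro t t' heq
    simp only [hfdef] at heq
    split_ifs at heq with h1 h2 h2
    · -- both edge type
      have hQ := hP _ (hpt_mem (Sum.inr t))
      have hk1 := hkey t h1
      have hmem : Sum.inr t' ∈ pt (Sum.inr t) := by rw [heq]; exact hpt_self _
      have := part_isolated hk hQ (hpt_self (Sum.inr t)) hk1.1 hk1.2 hmem
      exact (Sum.inr_injective this).symm
    · -- edge / non-edge
      have hQ := hP _ (hpt_mem (Sum.inr t))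
      have hk1 := hkey t h1
      have hmem : Sum.inl (t'+1) ∈ pt (Sum.inr t) := by rw [heq]; exact hpt_self _
      have := part_isolated hk hQ (hpt_self (Sum.inr t)) hk1.1 hk1.2 hmem
      exact absurd this (by simp)
    · -- non-edge / edge
      have hQ := hP _ (hpt_mem (Sum.inr t'))
      have hk1 := hkey t' h2
      have hmem : Sum.inl (t+1) ∈ pt (Sum.inr t') := by rw [← heq]; exact hpt_self _
      have := part_isolated hk hQ (hpt_self (Sum.inr t')) hk1.1 hk1.2 hmem
      exact absurd this (by simp)
    · -- both non-edge
      have hQ := hP _ (hpt_mem (Sum.inl (t+1)))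
      have hmem2 : Sum.inl (t'+1) ∈ pt (Sum.inl (t+1)) := by rw [heq]; exact hpt_self _
      have hnot2 : Sum.inl t' ∉ pt (Sum.inl (t+1)) := by rw [heq]; exact h2
      exact part_unique_entry hk hQ (hpt_self _) h1 hmem2 hnot2
  have := Finset.card_le_card_of_injOn (s := (Finset.univ : Finset (Fin k)))
    (t := P.parts) f (fun t _ => hf_mem t) hf_inj.injOn
  simpa using this

end SunPCN


namespace SunPCN

lemma pair_injective {k : ℕ} :
    Function.Injective (fun i : Fin k => ({Sum.inl i, Sum.inr i} : Finset (Fin k ⊕ Fin k))) := by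
  intro i j h
  have h' : ({Sum.inl i, Sum.inr i} : Finset (Fin k ⊕ Fin k)) = {Sum.inl j, Sum.inr j} := h
  have : (Sum.inl i : Fin k ⊕ Fin k) ∈ ({Sum.inl j, Sum.inr j} : Finset (Fin k ⊕ Fin k)) := by
    rw [← h']; simp
  simpa using this

noncomputable def sunPartition (k : ℕ) : Finpartition (Finset.univ : Finset (Fin k ⊕ Fin k)) where
  parts := Finset.univ.image (fun i : Fin k => ({Sum.inl i, Sum.inr i} : Finset (Fin k ⊕ Fin k)))
  supIndep := by
    apply Finset.supIndep_iff_pairwiseDisjoint.mpr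
    intro p hp q hq hpq
    simp only [Finset.coe_image, Set.mem_image, Finset.mem_coe] at hp hq
    obtain ⟨i, -, rfl⟩ := hp
    obtain ⟨j, -, rfl⟩ := hq
    have hij : i ≠ j := fun h => hpq (by rw [h])
    simp only [Function.onFun, id]
    rw [Finset.disjoint_left]
    intro x hx hx'
    simp only [Finset.mem_insert, Finset.mem_singleton] at hx hx'
    rcases hx with rfl | rfl <;> rcases hx' with h | h <;>
      first
        | exact hij (Sum.inl_injective h)
        | exact hij (Sum.inr_injective h)
        | exact absurd h (by simp)
        | exact absurd h (by simp)
  sup_parts := by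
    apply Finset.Subset.antisymm
    · intro x _; exact Finset.mem_univ x
    · intro x _
      rw [Finset.mem_sup]
      rcases x with i | i
      · exact ⟨{Sum.inl i, Sum.inr i}, Finset.mem_image_of_mem _ (Finset.mem_univ i), by simp⟩
      · exact ⟨{Sum.inl i, Sum.inr i}, Finset.mem_image_of_mem _ (Finset.mem_univ i), by simp⟩
  bot_notMem := by
    simp only [Finset.bot_eq_empty, Finset.mem_image]
    rintro ⟨i, -, h⟩
    have hm : (Sum.inl i : Fin k ⊕ Fin k) ∈ ({Sum.inl i, Sum.inr i} : Finset (Fin k ⊕ Fin k)) := by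
      simp
    rw [h] at hm
    simp at hm

lemma sunPartition_card (k : ℕ) : (sunPartition k).parts.card = k := by
  rw [sunPartition]
  rw [Finset.card_image_of_injective _ pair_injective]
  simp

lemma sunPartition_paths {k : ℕ} [NeZero k] (hk : 3 ≤ k) :
    ∀ p ∈ (sunPartition k).parts, IsInducedPathSet (sunGraph k) ↑p := by
  intro p hp
  rw [sunPartition] at hp
  simp only [Finset.mem_image] at hp
  obtain ⟨i, -, rfl⟩ := hp
  refine ⟨[Sum.inl i, Sum.inr i], ⟨?_, ?_⟩, ?_⟩
  · simp
  · intro a b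
    fin_cases a <;> fin_cases b
    · exact iff_of_false ((sunGraph k).irrefl) (by omega)
    · exact iff_of_true ((sun_adj_lr hk i i).mpr (Or.inl rfl)) (Or.inl rfl)
    · exact iff_of_true ((sun_adj_rl hk i i).mpr (Or.inl rfl)) (Or.inr rfl)
    · exact iff_of_false ((sunGraph k).irrefl) (by omega)
  · ext x
    simp

end SunPCN

/-- For the sun graph `S_k` on `2k` vertices, the path cover number
`P(S_k)` equals `k`. -/
theorem pathCoverNumber_sunGraph (k : ℕ) (hk : 3 ≤ k) :
    pathCoverNumber (sunGraph k) = k := by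
  haveI : NeZero k := NeZero.of_pos (by omega)
  rw [pathCoverNumber]
  apply le_antisymm
  · exact Nat.sInf_le ⟨SunPCN.sunPartition k, SunPCN.sunPartition_card k,
      SunPCN.sunPartition_paths hk⟩
  · have hne : {n | ∃ P : Finpartition (Finset.univ : Finset (Fin k ⊕ Fin k)),
        P.parts.card = n ∧ ∀ p ∈ P.parts, IsInducedPathSet (sunGraph k) ↑p}.Nonempty :=
      ⟨k, SunPCN.sunPartition k, SunPCN.sunPartition_card k, SunPCN.sunPartition_paths hk⟩
    apply le_csInf hne
    rintro n ⟨P, hcard, hpaths⟩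
    exact hcard ▸ SunPCN.lower_bound hk P hpaths
end
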